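/- Let X be a nonempty closed convex subset of a reflexive real Banach space and let φ, ψ : X → ℝ be continuous convex functions with φ(x) ≥ 0 and ψ(x) > 0 for all x ∈ X. If X is unbounded, suppose also that ψ(x) → +∞ as ‖x‖ → +∞. Then there exists x̃ ∈ X such that φ(x̃)² + ψ(x̃)² = inf_{x∈X} ( φ(x̃)φ(x) + ψ(x̃)ψ(x) ). -/

import Mathlib

open Set Filter

section helpers
open NormedSpace Metric

variable {E : Type*} [NormedAddCommGroup E] [NormedSpace ℝ E]

lemma weakClosed' {s : Set E} (hconv : Convex ℝ s) (hcl : IsClosed s) :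
    IsClosed (toWeakSpace ℝ E '' s) := by
  have h := hconv.toWeakSpace_closure (𝕜 := ℝ)
  rw [hcl.closure_eq] at h
  rw [h]
  exact isClosed_closure

lemma weakCompactBall' (hrefl : Function.Surjective (inclusionInDoubleDual ℝ E)) (r : ℝ) :
    IsCompact (toWeakSpace ℝ E '' Metric.closedBall 0 r) := by
  set J := inclusionInDoubleDual ℝ E with hJ
  have hJinj : Function.Injective J := (inclusionInDoubleDualLi ℝ (E := E)).injective
  set g : WeakDual ℝ (StrongDual ℝ E) → WeakSpace ℝ E :=
    fun x'' => toWeakSpace ℝ E (Function.surjInv hrefl (WeakDual.toStrongDual x'')) with hg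
  have hgc : Continuous g := by
    apply WeakBilin.continuous_of_continuous_eval
    intro f
    have heq : (fun x'' : WeakDual ℝ (StrongDual ℝ E) =>
        (topDualPairing ℝ E).flip (g x'') f) = fun x'' => x'' f := by
      ext x''
      have h1 : J (Function.surjInv hrefl (WeakDual.toStrongDual x''))
          = WeakDual.toStrongDual x'' := Function.surjInv_eq hrefl _
      show f (Function.surjInv hrefl (WeakDual.toStrongDual x'')) = x'' f
      calc f (Function.surjInv hrefl (WeakDual.toStrongDual x''))
          = J (Function.surjInv hrefl (WeakDual.toStrongDual x'')) f := rfl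
        _ = x'' f := by rw [h1]; rfl
    rw [heq]
    exact WeakDual.eval_continuous f
  have hcomp := WeakDual.isCompact_closedBall (𝕜 := ℝ) (E := StrongDual ℝ E) 0 r
  have himg := hcomp.image hgc
  have hset : toWeakSpace ℝ E '' Metric.closedBall 0 r
      = g '' (WeakDual.toStrongDual ⁻¹' Metric.closedBall 0 r) := by
    ext w
    constructor
    · rintro ⟨x, hx, rfl⟩
      refine ⟨WeakDual.toStrongDual.symm (J x), ?_, ?_⟩
      · simp only [Set.mem_preimage, Metric.mem_closedBall, dist_zero_right]
        refine (dist_zero_right (WeakDual.toStrongDual (WeakDual.toStrongDual.symm (J x)))).le.trans ?_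
        show ‖J x‖ ≤ r
        calc ‖J x‖ ≤ ‖x‖ := double_dual_bound ℝ E x
          _ ≤ r := by simpa [dist_zero_right] using hx
      · show toWeakSpace ℝ E (Function.surjInv hrefl (J x)) = toWeakSpace ℝ E x
        congr 1
        exact hJinj (Function.surjInv_eq hrefl (J x))
    · rintro ⟨x'', hx'', rfl⟩
      refine ⟨Function.surjInv hrefl (WeakDual.toStrongDual x''), ?_, rfl⟩
      simp only [Set.mem_preimage, Metric.mem_closedBall, dist_zero_right] at hx'' ⊢
      have : ‖J (Function.surjInv hrefl (WeakDual.toStrongDual x''))‖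
          = ‖Function.surjInv hrefl (WeakDual.toStrongDual x'')‖ :=
        (inclusionInDoubleDualLi ℝ (E := E)).norm_map _
      rw [Function.surjInv_eq hrefl] at this
      rw [← this]
      exact (dist_zero_right (WeakDual.toStrongDual x'')).symm.le.trans hx''
  rw [hset]
  exact himg

lemma existsMin' (hrefl : Function.Surjective (inclusionInDoubleDual ℝ E))
    {K : Set E} (hne : K.Nonempty) (hcl : IsClosed K) (hcv : Convex ℝ K)
    (hbd : Bornology.IsBounded K) {f : E → ℝ} (hfc : ContinuousOn f K)
    (hfcv : ConvexOn ℝ K f) : ∃ a ∈ K, ∀ x ∈ K, f a ≤ f x := by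
  obtain ⟨r, hr⟩ := hbd.subset_closedBall (0 : E)
  have hKW : IsCompact (toWeakSpace ℝ E '' K) :=
    (weakCompactBall' hrefl r).of_isClosed_subset (weakClosed' hcv hcl)
      (Set.image_mono hr)
  set S : K → Set (WeakSpace ℝ E) := fun y =>
    toWeakSpace ℝ E '' {z ∈ K | f z ≤ f y} with hS
  have hSsub : ∀ y, {z ∈ K | f z ≤ f (y : E)} ⊆ K := fun y z hz => hz.1
  have hScl : ∀ y, IsClosed (S y) := fun y =>
    weakClosed' (hfcv.convex_le _) (hfc.preimage_isClosed_of_isClosed hcl isClosed_Iic)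
  have hScomp : ∀ y, IsCompact (S y) := fun y =>
    hKW.of_isClosed_subset (hScl y) (Set.image_mono (hSsub y))
  have hSne : ∀ y, (S y).Nonempty := fun y =>
    ⟨toWeakSpace ℝ E y, ⟨y, ⟨y.2, le_rfl⟩, rfl⟩⟩
  have hdir : Directed (· ⊇ ·) S := by
    intro y z
    rcases le_total (f y) (f z) with h | h
    · exact ⟨y, subset_rfl, Set.image_mono fun w hw => ⟨hw.1, hw.2.trans h⟩⟩
    · exact ⟨z, Set.image_mono (fun w hw => ⟨hw.1, hw.2.trans h⟩), subset_rfl⟩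
  have : Nonempty K := hne.to_subtype
  obtain ⟨w, hw⟩ := IsCompact.nonempty_iInter_of_directed_nonempty_isCompact_isClosed
    S hdir hSne hScomp hScl
  simp only [Set.mem_iInter] at hw
  obtain ⟨a, ⟨haK, -⟩, rfl⟩ := hw ⟨hne.choose, hne.choose_spec⟩
  refine ⟨a, haK, fun x hx => ?_⟩
  obtain ⟨z, ⟨hzK, hzle⟩, hza⟩ := hw ⟨x, hx⟩
  have : z = a := (toWeakSpace ℝ E).injective hza
  rwa [this] at hzle

lemma sqConvexOn' {E : Type*} [NormedAddCommGroup E] [NormedSpace ℝ E] {s : Set E} {g : E → ℝ}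
    (hg : ConvexOn ℝ s g) (h0 : ∀ x ∈ s, 0 ≤ g x) :
    ConvexOn ℝ s (fun x => g x ^ 2) := by
  refine ⟨hg.1, fun x hx y hy a b ha hb hab => ?_⟩
  have h1 := hg.2 hx hy ha hb hab
  have h2 := h0 _ (hg.1 hx hy ha hb hab)
  simp only [smul_eq_mul] at h1 ⊢
  nlinarith [h0 x hx, h0 y hy, sq_nonneg (g x - g y), mul_nonneg ha hb,
    mul_nonneg (mul_nonneg ha hb) (sq_nonneg (g x - g y))]

end helpers

/-- Corollary 3.1: X a nonempty closed convex subset of a reflexive real Banach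
space, φ, ψ continuous and convex on X, φ ≥ 0 and ψ > 0 on X, with ψ coercive on
X if X is unbounded.  Then there exists x̃ ∈ X with
φ(x̃)² + ψ(x̃)² = inf_{x∈X} (φ(x̃)φ(x) + ψ(x̃)ψ(x)). -/
theorem stmt8
    {E : Type*} [NormedAddCommGroup E] [NormedSpace ℝ E] [CompleteSpace E]
    (hrefl : Function.Surjective (NormedSpace.inclusionInDoubleDual ℝ E))
    (X : Set E) (hXne : X.Nonempty) (hXcl : IsClosed X) (hXcv : Convex ℝ X)
    (φ ψ : E → ℝ)
    (hφc : ContinuousOn φ X) (hψc : ContinuousOn ψ X)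
    (hφcv : ConvexOn ℝ X φ) (hψcv : ConvexOn ℝ X ψ)
    (hφ0 : ∀ x ∈ X, 0 ≤ φ x) (hψ0 : ∀ x ∈ X, 0 < ψ x)
    (hcoer : ¬ Bornology.IsBounded X →
      ∀ M : ℝ, ∃ R : ℝ, ∀ x ∈ X, R ≤ ‖x‖ → M ≤ ψ x) :
    ∃ xt ∈ X, ∀ x ∈ X,
      (φ xt) ^ 2 + (ψ xt) ^ 2 ≤ φ xt * φ x + ψ xt * ψ x := by
  set f : E → ℝ := fun x => φ x ^ 2 + ψ x ^ 2 with hf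
  have hfcv : ConvexOn ℝ X f :=
    (sqConvexOn' hφcv hφ0).add (sqConvexOn' hψcv fun x hx => (hψ0 x hx).le)
  have hfc : ContinuousOn f X := (hφc.pow 2).add (hψc.pow 2)
  obtain ⟨x₀, hx₀⟩ := hXne
  set c := f x₀ with hc
  set K := {x ∈ X | f x ≤ c} with hK
  have hKne : K.Nonempty := ⟨x₀, hx₀, le_rfl⟩
  have hKcl : IsClosed K := hfc.preimage_isClosed_of_isClosed hXcl isClosed_Iic
  have hKcv : Convex ℝ K := hfcv.convex_le c
  have hKsub : K ⊆ X := fun x hx => hx.1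
  have hKbd : Bornology.IsBounded K := by
    by_cases hXb : Bornology.IsBounded X
    · exact hXb.subset hKsub
    · obtain ⟨R, hR⟩ := hcoer hXb (max 1 c + 1)
      refine (Metric.isBounded_closedBall (x := (0 : E)) (r := |R|)).subset fun x hx => ?_
      simp only [Metric.mem_closedBall, dist_zero_right]
      by_contra hnx
      push_neg at hnx
      have hRx : R ≤ ‖x‖ := (le_abs_self R).trans hnx.le
      have h1 := hR x hx.1 hRx
      have h2 : ψ x ^ 2 ≤ c := by
        have hfx : φ x ^ 2 + ψ x ^ 2 ≤ c := hx.2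
        nlinarith [sq_nonneg (φ x)]
      nlinarith [le_max_left 1 c, le_max_right 1 c]
  obtain ⟨a, haK, hamin⟩ := existsMin' hrefl hKne hKcl hKcv hKbd
    (hfc.mono hKsub) (hfcv.subset hKsub hKcv)
  have haX : a ∈ X := hKsub haK
  have hminX : ∀ x ∈ X, f a ≤ f x := by
    intro x hx
    by_cases h : f x ≤ c
    · exact hamin x ⟨hx, h⟩
    · exact (hamin x₀ ⟨hx₀, le_rfl⟩).trans (not_le.mp h).le
  refine ⟨a, haX, fun x hx => ?_⟩
  set A := φ a; set B := ψ a; set p := φ x; set q := ψ x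
  set D := A * (p - A) + B * (q - B) with hD
  have hgoal : A ^ 2 + B ^ 2 ≤ A * p + B * q ↔ 0 ≤ D := by constructor <;> intro <;> nlinarith
  rw [hgoal]
  by_contra hDneg
  push_neg at hDneg
  set S := (p - A) ^ 2 + (q - B) ^ 2 with hSdef
  have hS0 : 0 ≤ S := by positivity
  set t := min 1 (-D / (S + 1)) with ht
  have ht0 : 0 < t := lt_min one_pos (div_pos (neg_pos.mpr hDneg) (by positivity))
  have ht1 : t ≤ 1 := min_le_left _ _
  have htS : t * (S + 1) ≤ -D := by
    rw [← le_div_iff₀ (by positivity)]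
    exact min_le_right _ _
  have hmem : (1 - t) • a + t • x ∈ X := hXcv haX hx (by linarith) ht0.le (by ring)
  have hφle : φ ((1 - t) • a + t • x) ≤ (1 - t) * A + t * p :=
    hφcv.2 haX hx (by linarith) ht0.le (by ring)
  have hψle : ψ ((1 - t) • a + t • x) ≤ (1 - t) * B + t * q :=
    hψcv.2 haX hx (by linarith) ht0.le (by ring)
  have hφnn : 0 ≤ φ ((1 - t) • a + t • x) := hφ0 _ hmem
  have hψnn : 0 ≤ ψ ((1 - t) • a + t • x) := (hψ0 _ hmem).le
  have hfy := hminX _ hmem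
  have hup : f a ≤ ((1 - t) * A + t * p) ^ 2 + ((1 - t) * B + t * q) ^ 2 := by
    refine hfy.trans (add_le_add ?_ ?_)
    · exact pow_le_pow_left₀ hφnn hφle 2
    · exact pow_le_pow_left₀ hψnn hψle 2
  have hfa : f a = A ^ 2 + B ^ 2 := rfl
  rw [hfa] at hup
  nlinarith [mul_pos ht0 ht0, sq_nonneg t, mul_nonneg ht0.le hS0, mul_pos ht0 (neg_pos.mpr hDneg)]
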